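/- arXiv:2402.01131 — 3 statements merged into one kernel-verified Lean document; each statement's English description precedes it below -/
import Mathlib

section
/- Let γ > 1, K > 0 and m ≠ 0 be real constants, define ξ(ρ) = m²/(2ρ²) + (γ/(γ−1))·K·ρ^(γ−1) for ρ > 0, and set ρ⋆ = (m²/(γK))^(1/(γ+1)), ξ⋆ = ξ(ρ⋆). For any real level λ: (i) if λ < ξ⋆ then there is no ρ > 0 with ξ(ρ) = λ; (ii) if λ = ξ⋆ then ρ⋆ is the unique ρ > 0 with ξ(ρ) = λ; (iii) if λ > ξ⋆ then there exist exactly two solutions ρ > 0 of ξ(ρ) = λ, one lying in (0, ρ⋆) and one lying in (ρ⋆, ∞). -/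
open Real Set


namespace XiAux

variable {γ K m : ℝ}

noncomputable def xi (γ K m ρ : ℝ) : ℝ :=
  m ^ 2 / (2 * ρ ^ 2) + (γ / (γ - 1)) * K * ρ ^ (γ - 1)

noncomputable def rs (γ K m : ℝ) : ℝ := (m ^ 2 / (γ * K)) ^ ((1 : ℝ) / (γ + 1))

lemma hm2 (hm : m ≠ 0) : 0 < m ^ 2 := by positivity

lemma hγK (hγ : 1 < γ) (hK : 0 < K) : 0 < γ * K := by positivity

lemma rs_pos (hγ : 1 < γ) (hK : 0 < K) (hm : m ≠ 0) : 0 < rs γ K m :=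
  Real.rpow_pos_of_pos (div_pos (hm2 hm) (hγK hγ hK)) _

lemma rs_key (hγ : 1 < γ) (hK : 0 < K) (hm : m ≠ 0) :
    rs γ K m ^ (γ + 1) = m ^ 2 / (γ * K) := by
  rw [rs, ← Real.rpow_mul (le_of_lt (div_pos (hm2 hm) (hγK hγ hK))),
    one_div, inv_mul_cancel₀ (by linarith : γ + 1 ≠ 0), Real.rpow_one]

lemma xi_deriv (hγ : 1 < γ) (ρ : ℝ) (hρ : 0 < ρ) :
    HasDerivAt (xi γ K m) ((γ * K * ρ ^ (γ + 1) - m ^ 2) / ρ ^ 3) ρ := by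
  have hρ' : ρ ≠ 0 := hρ.ne'
  have hγ1 : γ - 1 ≠ 0 := by intro h; linarith [sub_eq_zero.mp h]
  have h1 : HasDerivAt (fun ρ : ℝ => m ^ 2 / (2 * ρ ^ 2)) (-(m ^ 2) / ρ ^ 3) ρ := by
    have hu : HasDerivAt (fun ρ : ℝ => 2 * ρ ^ 2) (2 * (2 * ρ)) ρ := by
      simpa using ((hasDerivAt_pow 2 ρ).const_mul 2)
    have := (hasDerivAt_const ρ (m ^ 2)).div hu (by positivity)
    refine this.congr_deriv ?_
    field_simp
    ring
  have h2 : HasDerivAt (fun ρ : ℝ => (γ / (γ - 1)) * K * ρ ^ (γ - 1))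
      ((γ / (γ - 1)) * K * ((γ - 1) * ρ ^ (γ - 1 - 1))) ρ :=
    (Real.hasDerivAt_rpow_const (Or.inl hρ')).const_mul _
  have h := h1.add h2
  refine h.congr_deriv ?_
  have hsplit : ρ ^ (γ + 1) = ρ ^ (γ - 1 - 1) * ρ ^ 3 := by
    rw [← Real.rpow_natCast ρ 3, ← Real.rpow_add hρ]
    congr 1; ring
  rw [hsplit]
  field_simp
  ring

lemma xi_cont (hγ : 1 < γ) : ContinuousOn (xi γ K m) (Ioi 0) := by
  intro ρ hρ
  exact ((xi_deriv hγ ρ hρ).continuousAt).continuousWithinAt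

lemma deriv_neg (hγ : 1 < γ) (hK : 0 < K) (hm : m ≠ 0) (ρ : ℝ)
    (hρ : 0 < ρ) (hlt : ρ < rs γ K m) : deriv (xi γ K m) ρ < 0 := by
  rw [(xi_deriv hγ ρ hρ).deriv]
  apply div_neg_of_neg_of_pos _ (by positivity)
  have h := Real.rpow_lt_rpow hρ.le hlt (by linarith : (0:ℝ) < γ + 1)
  rw [rs_key hγ hK hm] at h
  have := hγK hγ hK
  linarith [(lt_div_iff₀ this).mp h]

lemma deriv_pos (hγ : 1 < γ) (hK : 0 < K) (hm : m ≠ 0) (ρ : ℝ)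
    (hlt : rs γ K m < ρ) : 0 < deriv (xi γ K m) ρ := by
  have hρ : 0 < ρ := (rs_pos hγ hK hm).trans hlt
  rw [(xi_deriv hγ ρ hρ).deriv]
  apply div_pos _ (by positivity)
  have h := Real.rpow_lt_rpow (rs_pos hγ hK hm).le hlt (by linarith : (0:ℝ) < γ + 1)
  rw [rs_key hγ hK hm] at h
  have := hγK hγ hK
  linarith [(div_lt_iff₀ this).mp h]

lemma xi_anti (hγ : 1 < γ) (hK : 0 < K) (hm : m ≠ 0) :
    StrictAntiOn (xi γ K m) (Ioc 0 (rs γ K m)) := by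
  apply strictAntiOn_of_deriv_neg (convex_Ioc _ _)
    ((xi_cont hγ).mono (fun x hx => hx.1))
  intro x hx
  rw [interior_Ioc] at hx
  exact deriv_neg hγ hK hm x hx.1 hx.2

lemma xi_mono (hγ : 1 < γ) (hK : 0 < K) (hm : m ≠ 0) :
    StrictMonoOn (xi γ K m) (Ici (rs γ K m)) := by
  apply strictMonoOn_of_deriv_pos (convex_Ici _)
    ((xi_cont hγ).mono (fun x hx => lt_of_lt_of_le (rs_pos hγ hK hm) hx))
  intro x hx
  rw [interior_Ici] at hx
  exact deriv_pos hγ hK hm x hx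

lemma xi_min (hγ : 1 < γ) (hK : 0 < K) (hm : m ≠ 0) (ρ : ℝ) (hρ : 0 < ρ)
    (hne : ρ ≠ rs γ K m) : xi γ K m (rs γ K m) < xi γ K m ρ := by
  rcases lt_or_gt_of_ne hne with h | h
  · exact xi_anti hγ hK hm ⟨hρ, h.le⟩ ⟨rs_pos hγ hK hm, le_refl _⟩ h
  · exact xi_mono hγ hK hm (le_refl (rs γ K m)) h.le h

lemma xi_min_le (hγ : 1 < γ) (hK : 0 < K) (hm : m ≠ 0) (ρ : ℝ) (hρ : 0 < ρ) :
    xi γ K m (rs γ K m) ≤ xi γ K m ρ := by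
  rcases eq_or_ne ρ (rs γ K m) with h | h
  · rw [h]
  · exact (xi_min hγ hK hm ρ hρ h).le

lemma xi_star_pos (hγ : 1 < γ) (hK : 0 < K) (hm : m ≠ 0) :
    0 < xi γ K m (rs γ K m) := by
  have h := rs_pos hγ hK hm
  have h1 : 0 < m ^ 2 / (2 * rs γ K m ^ 2) := by positivity
  have h2 : 0 < (γ / (γ - 1)) * K * rs γ K m ^ (γ - 1) := by
    have : 0 < rs γ K m ^ (γ - 1) := Real.rpow_pos_of_pos h _
    have : 0 < γ / (γ - 1) := div_pos (by linarith) (by linarith)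
    positivity
  unfold xi
  linarith

/-- small point with large value -/
lemma exists_small (hγ : 1 < γ) (hK : 0 < K) (hm : m ≠ 0) (lam : ℝ) (hlam : 0 < lam) :
    ∃ a : ℝ, 0 < a ∧ a < rs γ K m ∧ lam ≤ xi γ K m a := by
  set a := min (rs γ K m / 2) (Real.sqrt (m ^ 2 / (2 * lam))) with ha
  have hrs := rs_pos hγ hK hm
  have hs : 0 < Real.sqrt (m ^ 2 / (2 * lam)) := Real.sqrt_pos.mpr (by positivity)
  have ha0 : 0 < a := lt_min (by linarith) hs
  refine ⟨a, ha0, lt_of_le_of_lt (min_le_left _ _) (by linarith), ?_⟩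
  have h1 : a ^ 2 ≤ m ^ 2 / (2 * lam) := by
    have := min_le_right (rs γ K m / 2) (Real.sqrt (m ^ 2 / (2 * lam)))
    calc a ^ 2 ≤ Real.sqrt (m ^ 2 / (2 * lam)) ^ 2 := by nlinarith
      _ = m ^ 2 / (2 * lam) := Real.sq_sqrt (by positivity)
  have h2 : lam ≤ m ^ 2 / (2 * a ^ 2) := by
    rw [le_div_iff₀ (by positivity)]
    linarith [(le_div_iff₀ (by positivity : (0:ℝ) < 2 * lam)).mp h1]
  have h3 : 0 ≤ (γ / (γ - 1)) * K * a ^ (γ - 1) := by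
    have : 0 < a ^ (γ - 1) := Real.rpow_pos_of_pos ha0 _
    have : 0 < γ / (γ - 1) := div_pos (by linarith) (by linarith)
    positivity
  unfold xi
  linarith

/-- big point with large value -/
lemma exists_big (hγ : 1 < γ) (hK : 0 < K) (hm : m ≠ 0) (lam : ℝ) (hlam : 0 < lam) :
    ∃ b : ℝ, rs γ K m < b ∧ lam ≤ xi γ K m b := by
  set B := (γ / (γ - 1)) * K with hB
  have hBpos : 0 < B := by
    have : 0 < γ / (γ - 1) := div_pos (by linarith) (by linarith)
    positivity
  set b := max (rs γ K m + 1) ((lam / B) ^ ((1:ℝ) / (γ - 1))) with hb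
  have hrs := rs_pos hγ hK hm
  have hb0 : 0 < b := lt_of_lt_of_le (by linarith) (le_max_left _ _)
  refine ⟨b, lt_of_lt_of_le (by linarith) (le_max_left _ _), ?_⟩
  have hc : (lam / B) ^ ((1:ℝ) / (γ - 1)) ≤ b := le_max_right _ _
  have hcpos : 0 < (lam / B) ^ ((1:ℝ) / (γ - 1)) := Real.rpow_pos_of_pos (by positivity) _
  have h1 : lam / B ≤ b ^ (γ - 1) := by
    have := Real.rpow_le_rpow hcpos.le hc (by linarith : (0:ℝ) ≤ γ - 1)
    rwa [← Real.rpow_mul (by positivity : (0:ℝ) ≤ lam / B), one_div,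
      inv_mul_cancel₀ (by intro h; linarith [sub_eq_zero.mp h] : γ - 1 ≠ 0),
      Real.rpow_one] at this
  have h2 : lam ≤ B * b ^ (γ - 1) := by
    rw [div_le_iff₀ hBpos] at h1
    linarith [h1]
  have h3 : 0 ≤ m ^ 2 / (2 * b ^ 2) := by positivity
  unfold xi
  rw [← hB]
  linarith

end XiAux

/-- For γ > 1, K > 0, m ≠ 0, ξ(ρ) = m²/(2ρ²) + (γ/(γ−1))·K·ρ^(γ−1),
ρ⋆ = (m²/(γK))^(1/(γ+1)) and ξ⋆ = ξ(ρ⋆), and any level λ: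
(i) if λ < ξ⋆ there is no positive solution of ξ(ρ) = λ;
(ii) if λ = ξ⋆ then ρ⋆ is the unique positive solution;
(iii) if λ > ξ⋆ there are exactly two positive solutions, one in (0,ρ⋆) and
one in (ρ⋆,∞). -/
theorem xi_level_set_trichotomy
    (γ K m : ℝ) (hγ : 1 < γ) (hK : 0 < K) (hm : m ≠ 0) (lam : ℝ) :
    (lam < (fun ρ : ℝ => m ^ 2 / (2 * ρ ^ 2) + (γ / (γ - 1)) * K * ρ ^ (γ - 1))
        ((m ^ 2 / (γ * K)) ^ ((1 : ℝ) / (γ + 1))) →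
      ¬ ∃ ρ : ℝ, 0 < ρ ∧
        m ^ 2 / (2 * ρ ^ 2) + (γ / (γ - 1)) * K * ρ ^ (γ - 1) = lam) ∧
    (lam = (fun ρ : ℝ => m ^ 2 / (2 * ρ ^ 2) + (γ / (γ - 1)) * K * ρ ^ (γ - 1))
        ((m ^ 2 / (γ * K)) ^ ((1 : ℝ) / (γ + 1))) →
      ∀ ρ : ℝ, 0 < ρ →
        (m ^ 2 / (2 * ρ ^ 2) + (γ / (γ - 1)) * K * ρ ^ (γ - 1) = lam ↔
          ρ = (m ^ 2 / (γ * K)) ^ ((1 : ℝ) / (γ + 1)))) ∧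
    ((fun ρ : ℝ => m ^ 2 / (2 * ρ ^ 2) + (γ / (γ - 1)) * K * ρ ^ (γ - 1))
        ((m ^ 2 / (γ * K)) ^ ((1 : ℝ) / (γ + 1))) < lam →
      ∃ ρ₁ ρ₂ : ℝ,
        ρ₁ ∈ Set.Ioo 0 ((m ^ 2 / (γ * K)) ^ ((1 : ℝ) / (γ + 1))) ∧
        ρ₂ ∈ Set.Ioi ((m ^ 2 / (γ * K)) ^ ((1 : ℝ) / (γ + 1))) ∧
        m ^ 2 / (2 * ρ₁ ^ 2) + (γ / (γ - 1)) * K * ρ₁ ^ (γ - 1) = lam ∧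
        m ^ 2 / (2 * ρ₂ ^ 2) + (γ / (γ - 1)) * K * ρ₂ ^ (γ - 1) = lam ∧
        ∀ ρ : ℝ, 0 < ρ →
          m ^ 2 / (2 * ρ ^ 2) + (γ / (γ - 1)) * K * ρ ^ (γ - 1) = lam →
          ρ = ρ₁ ∨ ρ = ρ₂) := by
  show (lam < XiAux.xi γ K m (XiAux.rs γ K m) →
      ¬ ∃ ρ : ℝ, 0 < ρ ∧ XiAux.xi γ K m ρ = lam) ∧
    (lam = XiAux.xi γ K m (XiAux.rs γ K m) →
      ∀ ρ : ℝ, 0 < ρ → (XiAux.xi γ K m ρ = lam ↔ ρ = XiAux.rs γ K m)) ∧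
    (XiAux.xi γ K m (XiAux.rs γ K m) < lam →
      ∃ ρ₁ ρ₂ : ℝ, ρ₁ ∈ Set.Ioo 0 (XiAux.rs γ K m) ∧ ρ₂ ∈ Set.Ioi (XiAux.rs γ K m) ∧
        XiAux.xi γ K m ρ₁ = lam ∧ XiAux.xi γ K m ρ₂ = lam ∧
        ∀ ρ : ℝ, 0 < ρ → XiAux.xi γ K m ρ = lam → ρ = ρ₁ ∨ ρ = ρ₂)
  set f := XiAux.xi γ K m with hfdef
  set r := XiAux.rs γ K m with hrdef
  have hr : 0 < r := XiAux.rs_pos hγ hK hm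
  refine ⟨?_, ?_, ?_⟩
  · rintro h ⟨ρ, hρ, he⟩
    have hle := XiAux.xi_min_le hγ hK hm ρ hρ
    rw [← hfdef, ← hrdef, he] at hle
    linarith
  · intro h ρ hρ
    constructor
    · intro he
      by_contra hne
      have hlt := XiAux.xi_min hγ hK hm ρ hρ hne
      rw [← hfdef, ← hrdef, he, ← h] at hlt
      exact lt_irrefl _ hlt
    · intro he
      rw [he, h]
  · intro h
    have hlam : 0 < lam := (XiAux.xi_star_pos hγ hK hm).trans h
    obtain ⟨a, ha0, har, hav⟩ := XiAux.exists_small hγ hK hm lam hlam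
    obtain ⟨b, hbr, hbv⟩ := XiAux.exists_big hγ hK hm lam hlam
    have hcont1 : ContinuousOn f (Icc a r) :=
      (XiAux.xi_cont hγ).mono (fun x hx => lt_of_lt_of_le ha0 hx.1)
    have hcont2 : ContinuousOn f (Icc r b) :=
      (XiAux.xi_cont hγ).mono (fun x hx => lt_of_lt_of_le hr hx.1)
    obtain ⟨ρ₁, hρ₁m, hρ₁v⟩ := intermediate_value_Icc' har.le hcont1 ⟨h.le, hav⟩
    obtain ⟨ρ₂, hρ₂m, hρ₂v⟩ := intermediate_value_Icc hbr.le hcont2 ⟨h.le, hbv⟩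
    have hρ₁r : ρ₁ < r := lt_of_le_of_ne hρ₁m.2 (by
      intro he; rw [he] at hρ₁v; rw [hρ₁v] at h; exact lt_irrefl _ h)
    have hρ₂r : r < ρ₂ := lt_of_le_of_ne hρ₂m.1 (by
      intro he; rw [← he] at hρ₂v; rw [hρ₂v] at h; exact lt_irrefl _ h)
    have hρ₁0 : 0 < ρ₁ := lt_of_lt_of_le ha0 hρ₁m.1
    refine ⟨ρ₁, ρ₂, ⟨hρ₁0, hρ₁r⟩, hρ₂r, hρ₁v, hρ₂v, ?_⟩
    intro ρ hρ he
    have hne : ρ ≠ r := by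
      intro heq; rw [heq] at he; rw [he] at h; exact lt_irrefl _ h
    rcases lt_or_gt_of_ne hne with hlt | hgt
    · left
      exact (XiAux.xi_anti hγ hK hm).injOn ⟨hρ, hlt.le⟩ ⟨hρ₁0, hρ₁r.le⟩
        (he.trans hρ₁v.symm)
    · right
      exact (XiAux.xi_mono hγ hK hm).injOn (le_of_lt hgt) hρ₂r.le
        (he.trans hρ₂v.symm)
end

section
/- Let g > 0, θ > 0, b, E, m be real constants with m ≠ 0, set D = E − g·b·θ, and assume D > (3/2)·(g·θ·|m|)^(2/3). Let L = −1 + (27/4)·g²·θ²·m²/D³, t = arccos(L), and define h₁ = (D/(3gθ))·(1 − 2cos(t/3)), h₂ = (D/(3gθ))·(1 + cos(t/3) − √3·sin(t/3)), h₃ = (D/(3gθ))·(1 + cos(t/3) + √3·sin(t/3)). Then h₁ < 0 < h₂ < h₃; in particular the cubic P(h) = gθh³ − Dh² + m²/2 has exactly one negative and two positive real roots. -/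
open Real

set_option maxHeartbeats 2000000 in
/-- Ordering of the trigonometric roots of the Ripa cubic: h₁ < 0 < h₂ < h₃;
in particular the cubic P(h) = gθh³ − Dh² + m²/2 has exactly one negative and
exactly two positive real roots. -/
theorem ripa_cubic_roots_order
    (g θ b E m : ℝ) (hg : 0 < g) (hθ : 0 < θ) (hm : m ≠ 0)
    (hD : (3 / 2) * (g * θ * |m|) ^ ((2 : ℝ) / 3) < E - g * b * θ) :
    let D := E - g * b * θ
    let L := -1 + (27 / 4) * g ^ 2 * θ ^ 2 * m ^ 2 / D ^ 3
    let t := Real.arccos L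
    let h₁ := (D / (3 * g * θ)) * (1 - 2 * Real.cos (t / 3))
    let h₂ := (D / (3 * g * θ)) *
      (1 + Real.cos (t / 3) - Real.sqrt 3 * Real.sin (t / 3))
    let h₃ := (D / (3 * g * θ)) *
      (1 + Real.cos (t / 3) + Real.sqrt 3 * Real.sin (t / 3))
    let P : ℝ → ℝ := fun h => g * θ * h ^ 3 - D * h ^ 2 + m ^ 2 / 2
    (h₁ < 0 ∧ 0 < h₂ ∧ h₂ < h₃) ∧
    (∃! h : ℝ, h < 0 ∧ P h = 0) ∧
    (∃ a c : ℝ, 0 < a ∧ 0 < c ∧ a ≠ c ∧ P a = 0 ∧ P c = 0 ∧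
      ∀ h : ℝ, 0 < h → P h = 0 → h = a ∨ h = c) := by
  intro D L t h₁ h₂ h₃ P
  have hgθ : 0 < g * θ := mul_pos hg hθ
  have habs : 0 < |m| := abs_pos.mpr hm
  have hbase : 0 < g * θ * |m| := mul_pos hgθ habs
  have hRHS : 0 < (3 / 2) * (g * θ * |m|) ^ ((2 : ℝ) / 3) := by
    have := Real.rpow_pos_of_pos hbase ((2 : ℝ) / 3)
    linarith
  have hDpos : 0 < D := lt_trans hRHS hD
  have hD3 : 0 < D ^ 3 := pow_pos hDpos 3
  -- cube the hypothesis
  have hcube : 27 / 8 * (g ^ 2 * θ ^ 2 * m ^ 2) < D ^ 3 := by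
    have hx : ((g * θ * |m|) ^ ((2 : ℝ) / 3)) ^ (3 : ℕ) = g ^ 2 * θ ^ 2 * m ^ 2 := by
      rw [← Real.rpow_natCast ((g * θ * |m|) ^ ((2 : ℝ) / 3)) 3,
        ← Real.rpow_mul hbase.le]
      norm_num [mul_pow, sq_abs]
    have h1 : ((3 / 2) * (g * θ * |m|) ^ ((2 : ℝ) / 3)) ^ (3 : ℕ) < D ^ 3 := by
      apply pow_lt_pow_left₀ hD hRHS.le
      · norm_num
    calc 27 / 8 * (g ^ 2 * θ ^ 2 * m ^ 2)
        = ((3 / 2) * (g * θ * |m|) ^ ((2 : ℝ) / 3)) ^ (3 : ℕ) := by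
          rw [mul_pow, hx]; norm_num
      _ < D ^ 3 := h1
  have hm2pos : 0 < m ^ 2 := by positivity
  have hL1 : L < 1 := by
    have hlt : (27 / 4) * g ^ 2 * θ ^ 2 * m ^ 2 / D ^ 3 < 2 := by
      rw [div_lt_iff₀ hD3]; nlinarith
    show -1 + (27 / 4) * g ^ 2 * θ ^ 2 * m ^ 2 / D ^ 3 < 1
    linarith
  have hLm1 : -1 < L := by
    have hpos : 0 < (27 / 4) * g ^ 2 * θ ^ 2 * m ^ 2 / D ^ 3 := by positivity
    show -1 < -1 + (27 / 4) * g ^ 2 * θ ^ 2 * m ^ 2 / D ^ 3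
    linarith
  have hcosL : Real.cos t = L := Real.cos_arccos hLm1.le hL1.le
  have ht0 : 0 < t := Real.arccos_pos.mpr hL1
  have htπ : t < π := lt_of_le_of_ne (Real.arccos_le_pi L)
    (fun h => absurd (Real.arccos_eq_pi.mp h) (by linarith))
  set c := Real.cos (t / 3) with hcdef
  set s := Real.sin (t / 3) with hsdef
  have hpi : (0 : ℝ) < π := Real.pi_pos
  have hchalf : 1 / 2 < c := by
    have h1 : Real.cos (π / 3) < Real.cos (t / 3) := by
      apply Real.cos_lt_cos_of_nonneg_of_le_pi (by positivity) (by linarith)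
      linarith
    rw [Real.cos_pi_div_three] at h1
    exact h1
  have hspos : 0 < s := by
    apply Real.sin_pos_of_pos_of_lt_pi (by positivity)
    linarith
  have hc1 : c ≤ 1 := Real.cos_le_one _
  have hs2 : s ^ 2 = 1 - c ^ 2 := by
    have := Real.sin_sq_add_cos_sq (t / 3)
    linarith
  have hq : (Real.sqrt 3 * s) ^ 2 = 3 - 3 * c ^ 2 := by
    rw [mul_pow, Real.sq_sqrt (by norm_num : (3:ℝ) ≥ 0)]
    linarith
  have hq0 : 0 ≤ Real.sqrt 3 * s := mul_nonneg (Real.sqrt_nonneg 3) hspos.le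
  set k := D / (3 * g * θ) with hkdef
  have h3gθ : (3 : ℝ) * g * θ ≠ 0 := by positivity
  have hk : D = 3 * g * θ * k := by
    rw [hkdef]; field_simp
  have hkpos : 0 < k := div_pos hDpos (by positivity)
  have hcc : Real.cos t = 4 * c ^ 3 - 3 * c := by
    have h3 : t = 3 * (t / 3) := by ring
    rw [hcdef, h3, Real.cos_three_mul]
    ring_nf
  -- key identity for m²
  have hLc : (27 / 4) * g ^ 2 * θ ^ 2 * m ^ 2 / D ^ 3 = 4 * c ^ 3 - 3 * c + 1 := by
    have : L = 4 * c ^ 3 - 3 * c := hcosL.symm.trans hcc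
    have hL' : -1 + (27 / 4) * g ^ 2 * θ ^ 2 * m ^ 2 / D ^ 3 = 4 * c ^ 3 - 3 * c := this
    linarith
  have hm2' : m ^ 2 = g * θ * k ^ 3 * (16 * c ^ 3 - 12 * c + 4) := by
    have hD0 : D ≠ 0 := ne_of_gt hDpos
    have h1 : 27 * g ^ 2 * θ ^ 2 * m ^ 2 = (16 * c ^ 3 - 12 * c + 4) * D ^ 3 := by
      field_simp at hLc
      linarith
    rw [hk] at h1
    have hne : (27 : ℝ) * g ^ 2 * θ ^ 2 ≠ 0 := by positivity
    apply mul_left_cancel₀ hne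
    linear_combination h1
  -- explicit forms
  have e₁ : h₁ = k * (1 - 2 * c) := rfl
  have e₂ : h₂ = k * (1 + c - Real.sqrt 3 * s) := rfl
  have e₃ : h₃ = k * (1 + c + Real.sqrt 3 * s) := rfl
  have eP : ∀ h : ℝ, P h = g * θ * h ^ 3 - D * h ^ 2 + m ^ 2 / 2 := fun _ => rfl
  -- factorization
  have hfact : ∀ h : ℝ, P h = g * θ * (h - h₁) * (h - h₂) * (h - h₃) := by
    intro h
    rw [eP, e₁, e₂, e₃, hk]
    linear_combination (1 / 2) * hm2' + g * θ * k ^ 2 * (h - k * (1 - 2 * c)) * hq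
  -- ordering
  have hh₁neg : h₁ < 0 := by
    rw [e₁]
    apply mul_neg_of_pos_of_neg hkpos
    linarith
  have hmid : 0 < 1 + c - Real.sqrt 3 * s := by
    nlinarith [hq, hq0, hchalf, hc1]
  have hh₂pos : 0 < h₂ := by
    rw [e₂]; exact mul_pos hkpos hmid
  have hsq3s : 0 < Real.sqrt 3 * s :=
    mul_pos (Real.sqrt_pos.mpr (by norm_num)) hspos
  have hh₂₃ : h₂ < h₃ := by
    rw [e₂, e₃]
    apply mul_lt_mul_of_pos_left _ hkpos
    linarith
  have hh₃pos : 0 < h₃ := lt_trans hh₂pos hh₂₃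
  have hP₁ : P h₁ = 0 := by rw [hfact h₁]; ring
  have hP₂ : P h₂ = 0 := by rw [hfact h₂]; ring
  have hP₃ : P h₃ = 0 := by rw [hfact h₃]; ring
  have hroots : ∀ y : ℝ, P y = 0 → y = h₁ ∨ y = h₂ ∨ y = h₃ := by
    intro y hy
    rw [hfact y] at hy
    have hne : g * θ ≠ 0 := ne_of_gt hgθ
    rcases mul_eq_zero.mp hy with h | h
    · rcases mul_eq_zero.mp h with h | h
      · rcases mul_eq_zero.mp h with h | h
        · exact absurd h hne
        · exact Or.inl (sub_eq_zero.mp h)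
      · exact Or.inr (Or.inl (sub_eq_zero.mp h))
    · exact Or.inr (Or.inr (sub_eq_zero.mp h))
  refine ⟨⟨hh₁neg, hh₂pos, hh₂₃⟩, ⟨h₁, ⟨hh₁neg, hP₁⟩, ?_⟩, h₂, h₃, hh₂pos, hh₃pos,
    ne_of_lt hh₂₃, hP₂, hP₃, ?_⟩
  · rintro y ⟨hyneg, hy⟩
    rcases hroots y hy with h | h | h
    · exact h
    · exfalso; rw [h] at hyneg; linarith
    · exfalso; rw [h] at hyneg; linarith
  · intro h hpos hP
    rcases hroots h hP with h' | h' | h'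
    · exfalso; rw [h'] at hpos; linarith
    · exact Or.inl h'
    · exact Or.inr h'
end

section
/- Let g > 0, θ > 0, b, E, m be real constants with m ≠ 0, set D = E − g·b·θ, and assume D > (3/2)·(g·θ·|m|)^(2/3). If 0 < a < c are two positive real numbers with P(a) = P(c) = 0, where P(h) = g·θ·h³ − D·h² + m²/2, then g·θ·a³ < m² < g·θ·c³. Equivalently, with u = m/h and Froude number Fr = |u|/√(ghθ), the smaller positive root is supercritical (Fr > 1) and the larger positive root is subcritical (Fr < 1). -/
open Real

/-- If 0 < a < c are two positive roots of the Ripa cubic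
P(h) = gθh³ − Dh² + m²/2 (with D = E − gbθ > (3/2)(gθ|m|)^(2/3)), then
gθa³ < m² < gθc³: the smaller positive root is supercritical (Fr > 1) and
the larger one is subcritical (Fr < 1). -/
theorem ripa_roots_super_sub_critical
    (g θ b E m : ℝ) (hg : 0 < g) (hθ : 0 < θ) (hm : m ≠ 0)
    (hD : (3 / 2) * (g * θ * |m|) ^ ((2 : ℝ) / 3) < E - g * b * θ)
    (a c : ℝ) (ha : 0 < a) (hac : a < c)
    (hPa : g * θ * a ^ 3 - (E - g * b * θ) * a ^ 2 + m ^ 2 / 2 = 0)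
    (hPc : g * θ * c ^ 3 - (E - g * b * θ) * c ^ 2 + m ^ 2 / 2 = 0) :
    g * θ * a ^ 3 < m ^ 2 ∧ m ^ 2 < g * θ * c ^ 3 := by
  set D : ℝ := E - g * b * θ with hDdef
  have hgθ : 0 < g * θ := mul_pos hg hθ
  have hm2 : 0 < m ^ 2 := by positivity
  have hcpos : 0 < c := ha.trans hac
  set x : ℝ := (m ^ 2 / (g * θ)) ^ ((1 : ℝ) / 3) with hxdef
  have hbase : 0 < m ^ 2 / (g * θ) := by positivity
  have hxpos : 0 < x := Real.rpow_pos_of_pos hbase _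
  have hx3 : g * θ * x ^ 3 = m ^ 2 := by
    have h1 : x ^ (3 : ℕ) = m ^ 2 / (g * θ) := by
      rw [hxdef, ← Real.rpow_natCast ((m ^ 2 / (g * θ)) ^ ((1 : ℝ) / 3)) 3,
        ← Real.rpow_mul hbase.le]
      norm_num
    rw [h1]
    field_simp
  have hx2 : x ^ (2 : ℕ) = (m ^ 2 / (g * θ)) ^ ((2 : ℝ) / 3) := by
    rw [hxdef, ← Real.rpow_natCast ((m ^ 2 / (g * θ)) ^ ((1 : ℝ) / 3)) 2,
      ← Real.rpow_mul hbase.le]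
    norm_num
  have hkey : (g * θ * |m|) ^ ((2 : ℝ) / 3) * x ^ 2 = m ^ 2 := by
    rw [hx2, ← Real.mul_rpow (by positivity) hbase.le]
    have h2 : g * θ * |m| * (m ^ 2 / (g * θ)) = |m| ^ (3 : ℕ) := by
      field_simp
      rw [← sq_abs m]
    rw [h2, ← Real.rpow_natCast (|m|) 3, ← Real.rpow_mul (abs_nonneg m)]
    norm_num
  clear_value x
  clear_value D
  have hDx : (3 / 2) * m ^ 2 < D * x ^ 2 := by
    have := mul_lt_mul_of_pos_right hD (pow_pos hxpos 2)
    nlinarith [hkey]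
  have hPx : g * θ * x ^ 3 - D * x ^ 2 + m ^ 2 / 2 < 0 := by
    rw [hx3]; linarith
  -- Vieta-style identities from the two known roots
  have hne : a - c ≠ 0 := by linarith [hac]
  have e1 : g * θ * (a ^ 2 + a * c + c ^ 2) = D * (a + c) := by
    have h1 : (a - c) * (g * θ * (a ^ 2 + a * c + c ^ 2) - D * (a + c)) = 0 := by
      linear_combination hPa - hPc
    have := mul_eq_zero.mp h1
    rcases this with h | h
    · exact absurd h hne
    · linarith
  have e2 : a * c * (D - g * θ * (a + c)) = -(m ^ 2 / 2) := by
    have h1 : (a - c) * (a * c * (D - g * θ * (a + c)) + m ^ 2 / 2) = 0 := by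
      linear_combination a * hPc - c * hPa
    rcases mul_eq_zero.mp h1 with h | h
    · exact absurd h hne
    · linarith
  have hacpos : 0 < a * c := mul_pos ha hcpos
  have hsneg : D - g * θ * (a + c) < 0 := by
    by_contra h
    push_neg at h
    have h4 : 0 ≤ a * c * (D - g * θ * (a + c)) := mul_nonneg hacpos.le h
    rw [e2] at h4
    linarith
  have hfac : g * θ * x ^ 3 - D * x ^ 2 + m ^ 2 / 2 =
      (x - a) * (x - c) * (g * θ * x - (D - g * θ * (a + c))) := by
    linear_combination x * e1 + e2
  have hpos3 : 0 < g * θ * x - (D - g * θ * (a + c)) := by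
    nlinarith [mul_pos hgθ hxpos]
  have hprod : (x - a) * (x - c) < 0 := by
    by_contra h
    push_neg at h
    have h5 : 0 ≤ (x - a) * (x - c) * (g * θ * x - (D - g * θ * (a + c))) :=
      mul_nonneg h hpos3.le
    rw [← hfac] at h5
    linarith
  have hax : a < x ∧ x < c := by
    rcases mul_neg_iff.mp hprod with ⟨h1, h2⟩ | ⟨h1, h2⟩
    · exact ⟨by linarith, by linarith⟩
    · linarith
  constructor
  · have h6 : a ^ 3 < x ^ 3 := pow_lt_pow_left₀ hax.1 ha.le (by norm_num)
    have h7 := mul_lt_mul_of_pos_left h6 hgθ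
    rw [hx3] at h7
    exact h7
  · have h6 : x ^ 3 < c ^ 3 := pow_lt_pow_left₀ hax.2 hxpos.le (by norm_num)
    have h7 := mul_lt_mul_of_pos_left h6 hgθ
    rw [hx3] at h7
    exact h7
end
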